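/- Let h: 2^V → ℝ be a monotone nondecreasing normalized set function with submodularity ratio γ and generalized curvature ζ > 0. If S_k is produced by the approximate greedy rule h(v_j | S_{j-1}) ≥ max_v h(v | S_{j-1}) − r_j with r_j ≥ 0, then h(S_k) ≥ (1/ζ)(1 − e^{−ζγ})·h(S*) − Σ_{j=1}^k r_j, where S* is an optimal set of cardinality at most k. -/

import Mathlib

open Finset

/-- Marginal gain h(v | S) = h(S ∪ {v}) − h(S). -/
def marg {V : Type*} [DecidableEq V] (h : Finset V → ℝ) (v : V) (S : Finset V) : ℝ :=
  h (insert v S) - h S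

/-- Monotone nondecreasing set function. -/
def Monot {V : Type*} (f : Finset V → ℝ) : Prop := ∀ A B : Finset V, A ⊆ B → f A ≤ f B

noncomputable def Tcoef (γ ζ : ℝ) (s d : ℕ) : ℝ :=
  if d = 0 then 0 else ζ⁻¹ * (1 - (1 - ζ*γ/d)^(min s d))

lemma Tcoef_zero_s (γ ζ : ℝ) (d : ℕ) : Tcoef γ ζ 0 d = 0 := by
  unfold Tcoef; split <;> simp

lemma Tcoef_zero_d (γ ζ : ℝ) (s : ℕ) : Tcoef γ ζ s 0 = 0 := by simp [Tcoef]

lemma assemble {γ T1 T' D g ρ rr β : ℝ} (hD : 0 < D) (hg : 0 ≤ g) (hβ0 : 0 ≤ β) (hβ1 : β ≤ 1)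
    (hrr : 0 ≤ rr) (h1 : D*T1 ≤ D*T' + γ*β) (h2 : γ*g ≤ D*(ρ + rr)) :
    T1*g ≤ ρ*β + T'*g + rr := by
  have k1 : D*(T1*g) ≤ (D*T' + γ*β)*g := by
    nlinarith [mul_le_mul_of_nonneg_right h1 hg]
  have k2 : (γ*g)*β ≤ (D*(ρ+rr))*β := mul_le_mul_of_nonneg_right h2 hβ0
  have k4 : D*(rr*β) ≤ D*rr := by
    nlinarith [mul_nonneg (mul_nonneg hD.le hrr) (sub_nonneg.mpr hβ1)]
  have k3 : D*(T1*g) ≤ D*(ρ*β + T'*g + rr) := by nlinarith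
  exact le_of_mul_le_mul_left k3 hD

lemma bern_aux (y : ℝ) (hy : y ≤ 1) (n : ℕ) : 1 - n * y ≤ (1 - y)^n := by
  have := one_add_mul_le_pow (a := -y) (by linarith) n
  calc 1 - n*y = 1 + n * (-y) := by ring
  _ ≤ (1 + (-y))^n := this
  _ = (1-y)^n := by ring_nf

lemma base_mem {γ ζ : ℝ} (hγ0 : 0 < γ) (hγ1 : γ ≤ 1) (hζ0 : 0 < ζ) (hζ1 : ζ ≤ 1)
    {d : ℕ} (hd : 1 ≤ d) : 0 ≤ 1 - ζ*γ/d ∧ 1 - ζ*γ/d ≤ 1 := by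
  have hD : (1:ℝ) ≤ d := by exact_mod_cast hd
  have h1 : 0 < (d:ℝ) := by linarith
  have h2 : 0 ≤ ζ*γ := by positivity
  have h3 : ζ*γ ≤ 1 := by nlinarith
  constructor
  · have : ζ*γ/d ≤ 1 := by
      rw [div_le_one h1]; linarith
    linarith
  · have : 0 ≤ ζ*γ/d := by positivity
    linarith

lemma Tcoef_nonneg {γ ζ : ℝ} (hγ0 : 0 < γ) (hγ1 : γ ≤ 1) (hζ0 : 0 < ζ) (hζ1 : ζ ≤ 1)
    (s d : ℕ) : 0 ≤ Tcoef γ ζ s d := by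
  unfold Tcoef
  split
  · exact le_refl 0
  · rename_i hd
    have hd1 : 1 ≤ d := Nat.one_le_iff_ne_zero.mpr hd
    obtain ⟨hb0, hb1⟩ := base_mem hγ0 hγ1 hζ0 hζ1 hd1
    have : (1 - ζ*γ/d)^(min s d) ≤ 1 := pow_le_one₀ hb0 hb1
    have hz : 0 ≤ ζ⁻¹ := by positivity
    nlinarith

/-- Bernoulli-type bound giving Tcoef ≤ γ. -/
lemma Tcoef_le_gamma {γ ζ : ℝ} (hγ0 : 0 < γ) (hγ1 : γ ≤ 1) (hζ0 : 0 < ζ) (hζ1 : ζ ≤ 1)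
    (s d : ℕ) : Tcoef γ ζ s d ≤ γ := by
  unfold Tcoef
  split
  · positivity
  · rename_i hd
    have hd1 : 1 ≤ d := Nat.one_le_iff_ne_zero.mpr hd
    have hD : (1:ℝ) ≤ d := by exact_mod_cast hd1
    have hDpos : (0:ℝ) < d := by linarith
    set a := min s d with ha
    have hx1 : ζ*γ/d ≤ 1 := by
      have := (base_mem hγ0 hγ1 hζ0 hζ1 hd1).1; linarith
    have hbern : 1 - (a:ℝ) * (ζ*γ/d) ≤ (1 - ζ*γ/d)^a := bern_aux _ hx1 a
    have hmin : ((a : ℕ) : ℝ) ≤ (d:ℝ) := by exact_mod_cast Nat.min_le_right s d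
    have hx : 0 ≤ ζ*γ/d := by positivity
    have h4 : (a:ℝ) * (ζ*γ/d) ≤ (d:ℝ) * (ζ*γ/d) := mul_le_mul_of_nonneg_right hmin hx
    have h5 : (d:ℝ) * (ζ*γ/d) = ζ*γ := by field_simp
    rw [inv_mul_le_iff₀ hζ0]
    nlinarith

/-- The key analytic inequality (star). -/
lemma star_ineq {γ ζ : ℝ} (hγ0 : 0 < γ) (hγ1 : γ ≤ 1) (hζ0 : 0 < ζ) (hζ1 : ζ ≤ 1)
    {d : ℕ} (hd : 2 ≤ d) :
    ∀ e : ℕ, e + 1 ≤ d →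
      (1-ζ)*(γ/d) + (1-γ/d)*(1 - ζ*γ/((d:ℝ)-1))^e ≤ (1 - ζ*γ/d)^(e+1) := by
  have hD : (2:ℝ) ≤ d := by exact_mod_cast hd
  have hD0 : (0:ℝ) < d := by linarith
  have hD1 : (0:ℝ) < (d:ℝ) - 1 := by linarith
  have hzg : 0 < ζ*γ := by positivity
  have hzg1 : ζ*γ ≤ 1 := by nlinarith
  set c : ℝ := 1 - ζ*γ/((d:ℝ)-1) with hc
  have hc0 : 0 ≤ c := by
    have : ζ*γ/((d:ℝ)-1) ≤ 1 := by rw [div_le_one hD1]; linarith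
    simp [hc]; linarith
  have hc1 : c ≤ 1 := by
    have : 0 ≤ ζ*γ/((d:ℝ)-1) := by positivity
    simp [hc]; linarith
  -- R_e ≥ (1-ζ)γ for e ≤ d-2  (i.e. e+2 ≤ d)
  have Rbound : ∀ e : ℕ, e + 2 ≤ d → (1-ζ)*γ ≤ (1-ζ)*(γ/d) + (1-γ/d)*c^e := by
    intro e he
    have hce : 1 - ζ*γ ≤ c^e := by
      have h1 : 1 - (e:ℝ) * (ζ*γ/((d:ℝ)-1)) ≤ c^e := bern_aux _ (by rw [div_le_one hD1]; linarith) e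
      have h2 : (e:ℝ) ≤ (d:ℝ) - 1 := by
        have : (e:ℝ) + 2 ≤ d := by exact_mod_cast he
        linarith
      have h3 : (e:ℝ) * (ζ*γ/((d:ℝ)-1)) ≤ ((d:ℝ)-1) * (ζ*γ/((d:ℝ)-1)) := by
        apply mul_le_mul_of_nonneg_right h2 (by positivity)
      have h4 : ((d:ℝ)-1) * (ζ*γ/((d:ℝ)-1)) = ζ*γ := by field_simp
      linarith
    have hgd : γ/d ≤ 1 := by rw [div_le_one hD0]; linarith
    have key : 0 ≤ (1-γ)*((d:ℝ)-ζ*γ) := by nlinarith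
    have expand : (1-ζ)*(γ/d) + (1-γ/d)*(1-ζ*γ) - (1-ζ)*γ = (1-γ)*((d:ℝ)-ζ*γ)/d := by
      field_simp; ring
    have h5 := mul_le_mul_of_nonneg_left hce (by linarith : (0:ℝ) ≤ 1 - γ/d)
    have h6 : 0 ≤ (1-γ)*((d:ℝ)-ζ*γ)/d := by
      apply div_nonneg key (le_of_lt hD0)
    linarith
  intro e
  induction e with
  | zero =>
    intro _
    have : (1-ζ)*(γ/d) + (1-γ/d)*c^0 = 1 - ζ*γ/d := by
      simp; field_simp; ring
    rw [this, pow_one]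
  | succ e ih =>
    intro he
    have he' : e + 1 ≤ d := by omega
    have he2 : e + 2 ≤ d := by omega
    have ihe := ih he'
    have hR := Rbound e he2
    set R : ℝ := (1-ζ)*(γ/d) + (1-γ/d)*c^e with hRdef
    have hb0 : 0 ≤ 1 - ζ*γ/d := by
      have : ζ*γ/d ≤ 1 := by rw [div_le_one hD0]; nlinarith
      linarith
    have step1 : (1 - ζ*γ/d)^(e+2) ≥ (1 - ζ*γ/d) * R :=  by
      calc (1 - ζ*γ/d)^(e+2) = (1 - ζ*γ/d) * (1-ζ*γ/d)^(e+1) := by ring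
      _ ≥ (1 - ζ*γ/d) * R := by apply mul_le_mul_of_nonneg_left ihe hb0
    -- (1 - ζγ/d) * R ≥ R_{e+1}
    have hδ : (0:ℝ) ≤ ζ*γ/((d:ℝ)-1) - ζ*γ/d := by
      rw [sub_nonneg, div_le_div_iff₀ hD0 hD1]; nlinarith
    have key : (1 - ζ*γ/d) * R - ((1-ζ)*(γ/d) + (1-γ/d)*c^(e+1))
        = (ζ*γ/((d:ℝ)-1) - ζ*γ/d) * (R - (1-ζ)*γ) := by
      rw [hRdef, hc, pow_succ]; field_simp; ring
    nlinarith [mul_le_mul_of_nonneg_left hR hδ]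

/-- Good step: D·T(n+1,d) ≤ D·T(n,d) + γ(1 − ζ T(n,d)). -/
lemma good_step {γ ζ : ℝ} (hγ0 : 0 < γ) (hγ1 : γ ≤ 1) (hζ0 : 0 < ζ) (hζ1 : ζ ≤ 1)
    {d : ℕ} (hd : 1 ≤ d) (n : ℕ) :
    (d:ℝ) * Tcoef γ ζ (n+1) d ≤ d * Tcoef γ ζ n d + γ * (1 - ζ * Tcoef γ ζ n d) := by
  have hd0 : d ≠ 0 := by omega
  have hD : (1:ℝ) ≤ d := by exact_mod_cast hd
  have hD0 : (0:ℝ) < d := by linarith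
  have hzg1 : ζ*γ ≤ 1 := by nlinarith
  have hb0 : 0 ≤ 1 - ζ*γ/d := by
    have : ζ*γ/d ≤ 1 := by rw [div_le_one hD0]; linarith
    linarith
  have hb1 : 1 - ζ*γ/d ≤ 1 := by
    have : 0 ≤ ζ*γ/d := by positivity
    linarith
  unfold Tcoef
  simp only [hd0, if_false]
  rcases le_or_gt d n with hcase | hcase
  · have h1 : min (n+1) d = d := by omega
    have h2 : min n d = d := by omega
    rw [h1, h2]
    have hple : (1 - ζ*γ/d)^d ≤ 1 := pow_le_one₀ hb0 hb1
    have hzt : ζ * (ζ⁻¹ * (1 - (1 - ζ*γ/d)^d)) = 1 - (1-ζ*γ/d)^d := by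
      field_simp
    nlinarith [pow_nonneg hb0 d]
  · have h1 : min (n+1) d = n+1 := by omega
    have h2 : min n d = n := by omega
    rw [h1, h2]
    have key : ζ * (ζ⁻¹ * (1 - (1 - ζ*γ/d)^(n+1))) = 1 - (1-ζ*γ/d)^(n+1) := by
      field_simp
    have key2 : ζ * (ζ⁻¹ * (1 - (1 - ζ*γ/d)^n)) = 1 - (1-ζ*γ/d)^n := by
      field_simp
    -- equality: D T1 = D T' + γ(1-ζT')   since 1-ζT1 = (1-ζγ/D)(1-ζT')
    have main : (d:ℝ) * (ζ⁻¹ * (1 - (1 - ζ*γ/d)^(n+1)))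
        = d * (ζ⁻¹ * (1 - (1 - ζ*γ/d)^n)) + γ * (1 - ζ * (ζ⁻¹ * (1 - (1 - ζ*γ/d)^n))) := by
      rw [key2]
      have hpow : (1 - ζ*γ/d)^(n+1) = (1 - ζ*γ/d)^n * (1 - ζ*γ/d) := by ring
      rw [hpow]
      field_simp
      ring
    linarith [le_of_eq main]

/-- Bad step: D·T(n+1,d) ≤ D·T(n,d-1) + γ(1 − T(n,d-1)). -/
lemma bad_step {γ ζ : ℝ} (hγ0 : 0 < γ) (hγ1 : γ ≤ 1) (hζ0 : 0 < ζ) (hζ1 : ζ ≤ 1)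
    {d : ℕ} (hd : 1 ≤ d) (n : ℕ) :
    (d:ℝ) * Tcoef γ ζ (n+1) d ≤ d * Tcoef γ ζ n (d-1) + γ * (1 - Tcoef γ ζ n (d-1)) := by
  have hD : (1:ℝ) ≤ d := by exact_mod_cast hd
  have hD0 : (0:ℝ) < d := by linarith
  rcases eq_or_lt_of_le hd with h1 | h2
  · -- d = 1
    have hd1 : d = 1 := h1.symm
    subst hd1
    have h0 : Tcoef γ ζ n 0 = 0 := by simp [Tcoef]
    simp only [Nat.sub_self, h0, Nat.cast_one, one_mul, mul_zero, sub_zero, mul_one, zero_add]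
    exact Tcoef_le_gamma hγ0 hγ1 hζ0 hζ1 (n+1) 1
  · -- d ≥ 2
    have hd2 : 2 ≤ d := h2
    have hD2 : (2:ℝ) ≤ d := by exact_mod_cast hd2
    have hdm0 : d - 1 ≠ 0 := by omega
    have hd0 : d ≠ 0 := by omega
    have hcast : ((d-1:ℕ):ℝ) = (d:ℝ) - 1 := by
      push_cast [Nat.cast_sub hd]
      ring
    have hmin : min (n+1) d = min n (d-1) + 1 := by omega
    have hstar := star_ineq hγ0 hγ1 hζ0 hζ1 hd2 (min n (d-1)) (by omega)
    unfold Tcoef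
    simp only [hd0, if_false, hdm0, if_false]
    rw [hcast, hmin]
    set e := min n (d-1) with he
    set c : ℝ := 1 - ζ*γ/((d:ℝ)-1) with hc
    set b : ℝ := 1 - ζ*γ/(d:ℝ) with hb
    have hstar' : 0 ≤ (d:ℝ) * b^(e+1) - ((1-ζ)*γ + ((d:ℝ)-γ) * c^e) := by
      have hmul := mul_le_mul_of_nonneg_left hstar (le_of_lt hD0)
      have hhh : (d:ℝ) * ((1-ζ)*(γ/d) + (1-γ/d)*c^e) = (1-ζ)*γ + ((d:ℝ)-γ)*c^e := by
        field_simp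
      nlinarith
    have expand : (d:ℝ) * (ζ⁻¹ * (1 - c^e)) + γ * (1 - ζ⁻¹ * (1 - c^e))
        - (d:ℝ) * (ζ⁻¹ * (1 - b^(e+1)))
        = (ζ⁻¹) * ((d:ℝ) * b^(e+1) - ((1-ζ)*γ + ((d:ℝ)-γ) * c^e)) := by
      field_simp
      ring
    have hzi : (0:ℝ) ≤ ζ⁻¹ := by positivity
    nlinarith [mul_nonneg hzi hstar']

/-- Final: Tcoef γ ζ k d ≥ ζ⁻¹ (1 - exp(-ζγ)) for 1 ≤ d ≤ k. -/
lemma final_step {γ ζ : ℝ} (hγ0 : 0 < γ) (hγ1 : γ ≤ 1) (hζ0 : 0 < ζ) (hζ1 : ζ ≤ 1)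
    {d k : ℕ} (hd : 1 ≤ d) (hdk : d ≤ k) :
    ζ⁻¹ * (1 - Real.exp (-(ζ*γ))) ≤ Tcoef γ ζ k d := by
  have hd0 : d ≠ 0 := by omega
  have hD : (1:ℝ) ≤ d := by exact_mod_cast hd
  have hD0 : (0:ℝ) < d := by linarith
  have hzg1 : ζ*γ ≤ 1 := by nlinarith
  have hb0 : 0 ≤ 1 - ζ*γ/d := by
    have : ζ*γ/d ≤ 1 := by rw [div_le_one hD0]; linarith
    linarith
  have hmin : min k d = d := by omega
  unfold Tcoef
  simp only [hd0, if_false, hmin]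
  have h1 : 1 - ζ*γ/d ≤ Real.exp (-(ζ*γ/d)) := by
    linarith [Real.add_one_le_exp (-(ζ*γ/d))]
  have h2 : (1 - ζ*γ/d)^d ≤ (Real.exp (-(ζ*γ/d)))^d := pow_le_pow_left₀ hb0 h1 d
  have h3 : (Real.exp (-(ζ*γ/d)))^d = Real.exp (-(ζ*γ)) := by
    rw [← Real.exp_nat_mul]
    congr 1
    field_simp
  have hzinv : 0 ≤ ζ⁻¹ := by positivity
  rw [h3] at h2
  apply mul_le_mul_of_nonneg_left _ hzinv
  linarith

theorem stmt_1 {V : Type*} [Fintype V] [DecidableEq V]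
    (h : Finset V → ℝ) (γ ζ : ℝ) (k : ℕ)
    (hm : Monot h) (h0 : h ∅ = 0)
    -- γ is a valid submodularity ratio for h
    (hγ : ∀ A B : Finset V, (∑ v ∈ B \ A, marg h v A) ≥ γ * (h (B ∪ A) - h A))
    (hγ0 : 0 ≤ γ) (hγ1 : γ ≤ 1)
    -- ζ is a valid generalized curvature for h
    (hζ : ∀ (A B : Finset V) (v : V), v ∈ A → v ∉ B →
      marg h v ((A.erase v) ∪ B) ≥ (1 - ζ) * marg h v (A.erase v))
    (hζ0 : 0 < ζ) (hζ1 : ζ ≤ 1)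
    (v : ℕ → V) (S : ℕ → Finset V) (r : ℕ → ℝ)
    (hS0 : S 0 = ∅)
    (hSsucc : ∀ j < k, S (j + 1) = insert (v j) (S j))
    (hr : ∀ j, 0 ≤ r j)
    (hgreedy : ∀ j < k, ∀ w : V, marg h (v j) (S j) ≥ marg h w (S j) - r j)
    (Sstar : Finset V)
    (hcard : Sstar.card ≤ k)
    (hopt : ∀ T : Finset V, T.card ≤ k → h T ≤ h Sstar) :
    h (S k) ≥ (1 / ζ) * (1 - Real.exp (-(ζ * γ))) * h Sstar
      - ∑ j ∈ Finset.range k, r j := by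
  have hSk0 : 0 ≤ h (S k) := by rw [← h0]; exact hm ∅ (S k) (Finset.empty_subset _)
  have hrsum : 0 ≤ ∑ j ∈ Finset.range k, r j := Finset.sum_nonneg fun j _ => hr j
  rcases eq_or_lt_of_le hγ0 with hγeq | hγpos
  · -- γ = 0 : trivial
    rw [← hγeq]
    simp only [mul_zero, Real.exp_zero, neg_zero, sub_self, zero_mul, mul_zero, zero_sub]
    linarith
  -- main case γ > 0
  have hSstar0 : 0 ≤ h Sstar := by rw [← h0]; exact hm ∅ Sstar (Finset.empty_subset _)
  have main : ∀ n i, i + n = k →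
      h (S k) ≥ h (S i)
        + Tcoef γ ζ n ((Sstar \ S i).card) * (h (Sstar ∪ S i) - h (S i))
        - ∑ j ∈ Finset.Ico i k, r j := by
    intro n
    induction n with
    | zero =>
      intro i hik
      have : i = k := by omega
      subst this
      rw [Tcoef_zero_s]
      simp
    | succ n ih =>
      intro i hik
      have hi : i < k := by omega
      have hIH := ih (i+1) (by omega)
      set d := (Sstar \ S i).card with hd
      set g := h (Sstar ∪ S i) - h (S i) with hg
      set ρ := h (S (i+1)) - h (S i) with hρ
      have hSeq : S (i+1) = insert (v i) (S i) := hSsucc i hi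
      have hρ0 : 0 ≤ ρ := by
        rw [hρ, hSeq]
        have := hm (S i) (insert (v i) (S i)) (Finset.subset_insert _ _)
        linarith
      have hg0 : 0 ≤ g := by
        have := hm (S i) (Sstar ∪ S i) Finset.subset_union_right
        rw [hg]; linarith
      have hmarg : marg h (v i) (S i) = ρ := by rw [hρ, hSeq]; rfl
      -- submodularity ratio + greedy bound
      have hsum : γ * g ≤ (d:ℝ) * (ρ + r i) := by
        have h1 := hγ (S i) Sstar
        have h2 : ∑ w ∈ Sstar \ S i, marg h w (S i) ≤ (Sstar \ S i).card • (ρ + r i) := by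
          apply Finset.sum_le_card_nsmul
          intro w hw
          have := hgreedy i hi w
          rw [hmarg] at this
          linarith
        rw [nsmul_eq_mul] at h2
        rw [hg]
        calc γ * (h (Sstar ∪ S i) - h (S i)) ≤ ∑ w ∈ Sstar \ S i, marg h w (S i) := h1
        _ ≤ (d:ℝ) * (ρ + r i) := h2
      have hRsplit : ∑ j ∈ Finset.Ico i k, r j = r i + ∑ j ∈ Finset.Ico (i+1) k, r j :=
        Finset.sum_eq_sum_Ico_succ_bot hi _
      by_cases hcA : v i ∈ Sstar \ S i
      · -- Case A : greedy picks a new optimal element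
        have hvS : v i ∈ Sstar := (Finset.mem_sdiff.mp hcA).1
        have hvn : v i ∉ S i := (Finset.mem_sdiff.mp hcA).2
        have hdpos : 1 ≤ d := by
          rw [hd]
          exact Finset.card_pos.mpr ⟨v i, hcA⟩
        have hDpos : (0:ℝ) < d := by exact_mod_cast hdpos
        have hunion : Sstar ∪ S (i+1) = Sstar ∪ S i := by
          rw [hSeq, Finset.union_insert, Finset.insert_eq_self.mpr (Finset.mem_union_left _ hvS)]
        have hsd : Sstar \ S (i+1) = (Sstar \ S i).erase (v i) := by
          rw [hSeq]
          ext a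
          simp only [Finset.mem_sdiff, Finset.mem_insert, Finset.mem_erase]
          constructor
          · rintro ⟨ha, h2⟩
            exact ⟨fun hh => h2 (Or.inl hh), ha, fun hh => h2 (Or.inr hh)⟩
          · rintro ⟨hne, ha, h2⟩
            exact ⟨ha, by rintro (rfl | hh) <;> [exact hne rfl; exact h2 hh]⟩
        have hcard' : (Sstar \ S (i+1)).card = d - 1 := by
          rw [hsd, Finset.card_erase_of_mem hcA]
        rw [hcard', hunion] at hIH
        set T' := Tcoef γ ζ n (d-1) with hT'
        have hT'0 : 0 ≤ T' := Tcoef_nonneg hγpos hγ1 hζ0 hζ1 _ _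
        have hT'1 : T' ≤ 1 := le_trans (Tcoef_le_gamma hγpos hγ1 hζ0 hζ1 _ _) hγ1
        have hbad := bad_step hγpos hγ1 hζ0 hζ1 hdpos n
        have hassem : Tcoef γ ζ (n+1) d * g ≤ ρ*(1-T') + T'*g + r i :=
          assemble hDpos hg0 (by linarith) (by linarith) (hr i) hbad hsum
        have hgap : h (Sstar ∪ S i) - h (S (i+1)) = g - ρ := by rw [hg, hρ]; ring
        rw [hgap] at hIH
        rw [hRsplit]
        nlinarith [hIH]
      · -- Case B : v i not a new optimal element
        have hvi : v i ∈ Sstar → v i ∈ S i := by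
          intro hv
          by_contra hns
          exact hcA (Finset.mem_sdiff.mpr ⟨hv, hns⟩)
        have hsd : Sstar \ S (i+1) = Sstar \ S i := by
          rw [hSeq]
          ext a
          simp only [Finset.mem_sdiff, Finset.mem_insert]
          constructor
          · rintro ⟨ha, h2⟩
            exact ⟨ha, fun hh => h2 (Or.inr hh)⟩
          · rintro ⟨ha, h2⟩
            refine ⟨ha, ?_⟩
            rintro (rfl | hh)
            · exact h2 (hvi ha)
            · exact h2 hh
        have hcard' : (Sstar \ S (i+1)).card = d := by rw [hsd]
        -- curvature: g_{i+1} ≥ g - ζρ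
        have hgstep : g - ζ*ρ ≤ h (Sstar ∪ S (i+1)) - h (S (i+1)) := by
          by_cases hvSi : v i ∈ S i
          · have hSS : S (i+1) = S i := by rw [hSeq, Finset.insert_eq_self.mpr hvSi]
            have hρz : ρ = 0 := by rw [hρ, hSS]; ring
            rw [hSS, hρz]
            rw [hg]; ring_nf; exact le_refl _
          · have hvnotstar : v i ∉ Sstar := fun hv => hcA (Finset.mem_sdiff.mpr ⟨hv, hvSi⟩)
            have hcurv := hζ (insert (v i) (S i)) Sstar (v i) (Finset.mem_insert_self _ _) hvnotstar
            rw [Finset.erase_insert hvSi] at hcurv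
            have hu1 : Sstar ∪ S (i+1) = insert (v i) (S i ∪ Sstar) := by
              rw [hSeq]
              ext a
              simp only [Finset.mem_union, Finset.mem_insert]
              tauto
            unfold marg at hcurv
            have hmarg' : h (insert (v i) (S i)) - h (S i) = ρ := by rw [hρ, hSeq]
            rw [hmarg'] at hcurv
            have e1 : h (Sstar ∪ S (i+1)) = h (insert (v i) (S i ∪ Sstar)) := by rw [hu1]
            have e2 : h (Sstar ∪ S i) = h (S i ∪ Sstar) := by rw [Finset.union_comm]
            have e3 : h (S (i+1)) = h (S i) + ρ := by rw [hρ]; ring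
            rw [hg]
            linarith [hcurv, e1, e2, e3]
        rcases Nat.eq_zero_or_pos d with hd0 | hdpos
        · -- d = 0 : Sstar ⊆ S i
          have hc0 : (Sstar \ S (i+1)).card = 0 := by rw [hcard', hd0]
          rw [hc0, Tcoef_zero_d] at hIH
          rw [hd0, Tcoef_zero_d, hRsplit]
          simp only [zero_mul] at hIH ⊢
          have hmono : 0 ≤ h (S (i+1)) - h (S i) := by rw [← hρ]; exact hρ0
          linarith [hr i, hIH]
        · have hDpos : (0:ℝ) < d := by exact_mod_cast hdpos
          rw [hcard'] at hIH
          set T' := Tcoef γ ζ n d with hT'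
          have hT'0 : 0 ≤ T' := Tcoef_nonneg hγpos hγ1 hζ0 hζ1 _ _
          have hT'g : T' ≤ γ := Tcoef_le_gamma hγpos hγ1 hζ0 hζ1 _ _
          have hζT' : ζ * T' ≤ 1 := by nlinarith
          have hζT'0 : 0 ≤ ζ * T' := by positivity
          have hgood := good_step hγpos hγ1 hζ0 hζ1 hdpos n
          have hassem : Tcoef γ ζ (n+1) d * g ≤ ρ*(1-ζ*T') + T'*g + r i :=
            assemble hDpos hg0 (by linarith) (by linarith) (hr i) hgood hsum
          have hTmul : T' * (g - ζ*ρ) ≤ T' * (h (Sstar ∪ S (i+1)) - h (S (i+1))) :=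
            mul_le_mul_of_nonneg_left hgstep hT'0
          rw [hRsplit]
          nlinarith [hIH]
  -- conclude
  have hC0 := main k 0 (by omega)
  rw [hS0] at hC0
  simp only [Finset.union_empty, Finset.sdiff_empty, h0, sub_zero, zero_add] at hC0
  rw [← Finset.range_eq_Ico] at hC0
  rcases Nat.eq_zero_or_pos Sstar.card with hc0 | hcpos
  · have hSe : Sstar = ∅ := Finset.card_eq_zero.mp hc0
    rw [hSe, h0]
    simp only [mul_zero, zero_sub]
    linarith
  · have hfin := final_step hγpos hγ1 hζ0 hζ1 hcpos hcard
    have hmulf := mul_le_mul_of_nonneg_right hfin hSstar0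
    rw [one_div]
    linarith [hC0, hmulf]
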